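/- Let 𝒜 be a finite arrangement of hyperplanes H_{ij}^a = {x_i - x_j = a} with a > 0 in V = {x ∈ ℝ^n : Σ x_i = 0}, and G = G_𝒜 its oriented multigraph. For every G-parking function f there exists a point r ∈ V lying in the complement of all hyperplanes of 𝒜 such that for every i, f(i) = #{H_{ij}^a ∈ 𝒜 : r_i - r_j > a}. That is, the Pak–Stanley labeling of the regions of 𝒜 by G-parking functions is surjective. -/

import Mathlib

open scoped Classical

section Aux
variable {n : ℕ} (A : Finset (Fin n × Fin n × ℝ)) (f : Fin n → ℕ)

noncomputable def cnt (r : Fin n → ℝ) (i : Fin n) : ℕ :=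
  (A.filter (fun h => h.1 = i ∧ r h.1 - r h.2.1 > h.2.2)).card

noncomputable def Vals : Finset ℝ := A.image (fun h => h.2.2)

noncomputable def BAD : Finset ℝ :=
  insert 0 ((Vals A ∪ (Vals A).image (fun a => -a)) ∪
    ((Vals A ×ˢ Vals A).image (fun p => p.1 - p.2)))

def Gen (r : Fin n → ℝ) : Prop := ∀ i j : Fin n, i ≠ j → r i - r j ∉ BAD A

lemma vals_mem {h : Fin n × Fin n × ℝ} (hA : h ∈ A) : h.2.2 ∈ Vals A :=
  Finset.mem_image_of_mem _ hA

lemma vals_mem_BAD {a : ℝ} (ha : a ∈ Vals A) : a ∈ BAD A :=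
  Finset.mem_insert_of_mem (Finset.mem_union_left _ (Finset.mem_union_left _ ha))

lemma diff_mem_BAD {a b : ℝ} (ha : a ∈ Vals A) (hb : b ∈ Vals A) : a - b ∈ BAD A :=
  Finset.mem_insert_of_mem (Finset.mem_union_right _
    (Finset.mem_image.mpr ⟨(a, b), Finset.mem_product.mpr ⟨ha, hb⟩, rfl⟩))


lemma BAD_neg {b : ℝ} (hb : b ∈ BAD A) : -b ∈ BAD A := by
  rcases Finset.mem_insert.mp hb with h0 | hb'
  · rw [h0, neg_zero]; exact Finset.mem_insert_self _ _
  · rcases Finset.mem_union.mp hb' with hb2 | hdiff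
    · rcases Finset.mem_union.mp hb2 with hv | hnv
      · exact Finset.mem_insert_of_mem (Finset.mem_union_left _
          (Finset.mem_union_right _ (Finset.mem_image_of_mem _ hv)))
      · obtain ⟨a, ha, rfl⟩ := Finset.mem_image.mp hnv
        rw [neg_neg]
        exact Finset.mem_insert_of_mem (Finset.mem_union_left _ (Finset.mem_union_left _ ha))
    · obtain ⟨p, hp, rfl⟩ := Finset.mem_image.mp hdiff
      have hm := Finset.mem_product.mp hp
      exact Finset.mem_insert_of_mem (Finset.mem_union_right _
        (Finset.mem_image.mpr ⟨(p.2, p.1), Finset.mem_product.mpr ⟨hm.2, hm.1⟩, by ring⟩))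

-- update-count lemma
lemma cnt_update (hpos : ∀ h ∈ A, 0 < h.2.2) (r : Fin n → ℝ) (i : Fin n) (x : ℝ)
    (hx : x ≤ r i) :
    cnt A (Function.update r i x) i
      = ((A.filter (fun h => h.1 = i)).filter (fun h => r h.2.1 + h.2.2 < x)).card := by
  unfold cnt
  rw [Finset.filter_filter]
  congr 1
  apply Finset.filter_congr
  intro h hA
  by_cases h1 : h.1 = i
  · have hup1 : Function.update r i x h.1 = x := by rw [h1]; exact Function.update_self ..
    simp only [h1, true_and]
    by_cases h2 : h.2.1 = i
    · have hup2 : Function.update r i x h.2.1 = x := by rw [h2]; exact Function.update_self ..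
      have := hpos h hA
      constructor
      · intro hxx; rw [Function.update_self, hup2] at hxx; linarith
      · intro hxx; rw [h2] at hxx; linarith
    · have hup2 : Function.update r i x h.2.1 = r h.2.1 := Function.update_of_ne h2 _ _
      constructor
      · intro hxx; rw [Function.update_self, hup2] at hxx; linarith
      · intro hxx; rw [Function.update_self, hup2]; linarith
  · simp only [h1, false_and]

lemma cnt_plain (hpos : ∀ h ∈ A, 0 < h.2.2) (r : Fin n → ℝ) (i : Fin n) :
    cnt A r i
      = ((A.filter (fun h => h.1 = i)).filter (fun h => r h.2.1 + h.2.2 < r i)).card := by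
  have := cnt_update A hpos r i (r i) le_rfl
  rwa [Function.update_eq_self] at this

lemma wall_injOn (r : Fin n → ℝ) (hGen : Gen A r) (i : Fin n) :
    Set.InjOn (fun h : Fin n × Fin n × ℝ => r h.2.1 + h.2.2)
      ↑(A.filter (fun h => h.1 = i)) := by
  intro h hh h' hh' heq
  simp only [Finset.coe_filter, Set.mem_setOf_eq] at hh hh'
  simp only at heq
  by_cases hjj : h.2.1 = h'.2.1
  · have h22 : h.2.2 = h'.2.2 := by rw [hjj] at heq; linarith
    exact Prod.ext (hh.2.trans hh'.2.symm) (Prod.ext hjj h22)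
  · exfalso
    have hb : h'.2.2 - h.2.2 ∈ BAD A := diff_mem_BAD A (vals_mem A hh'.1) (vals_mem A hh.1)
    have heq2 : r h.2.1 - r h'.2.1 = h'.2.2 - h.2.2 := by linarith
    exact hGen _ _ hjj (heq2 ▸ hb)

lemma walls_card (r : Fin n → ℝ) (hGen : Gen A r) (i : Fin n) (x : ℝ) :
    ((A.filter (fun h => h.1 = i)).filter (fun h => r h.2.1 + h.2.2 < x)).card
      = (((A.filter (fun h => h.1 = i)).image (fun h => r h.2.1 + h.2.2)).filter
          (fun v => v < x)).card := by
  rw [Finset.filter_image]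
  rw [Finset.card_image_of_injOn ((wall_injOn A r hGen i).mono ?_)]
  exact Finset.coe_subset.2 (Finset.filter_subset _ _)


lemma exists_cut (V : Finset ℝ) : ∀ m, m < V.card → ∃ u ∈ V, (V.filter (fun v => v < u)).card = m
  | 0, hm => by
    have hne : V.Nonempty := Finset.card_pos.mp (Nat.pos_of_ne_zero (by omega))
    refine ⟨V.min' hne, V.min'_mem hne, ?_⟩
    rw [Finset.card_eq_zero, Finset.filter_eq_empty_iff]
    intro v hv
    exact not_lt.2 (V.min'_le v hv)
  | (m+1), hm => by
    obtain ⟨u, hu, hcard⟩ := exists_cut V m (by omega)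
    have hWne : (V.filter (fun v => u < v)).Nonempty := by
      rw [← Finset.card_pos]
      by_contra hc
      have hemp : V.filter (fun v => u < v) = ∅ := by
        rw [← Finset.card_eq_zero]; omega
      have hsub : V ⊆ insert u (V.filter (fun v => v < u)) := by
        intro v hv
        rcases lt_trichotomy v u with h | h | h
        · exact Finset.mem_insert_of_mem (Finset.mem_filter.mpr ⟨hv, h⟩)
        · exact Finset.mem_insert.mpr (Or.inl h)
        · exfalso
          have : v ∈ V.filter (fun v => u < v) := Finset.mem_filter.mpr ⟨hv, h⟩
          rw [hemp] at this; exact absurd this (Finset.notMem_empty v)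
      have := Finset.card_le_card hsub
      have hci := Finset.card_insert_le u (V.filter (fun v => v < u))
      omega
    set u' := (V.filter (fun v => u < v)).min' hWne with hu'def
    have hu'mem := (V.filter (fun v => u < v)).min'_mem hWne
    have hu'V : u' ∈ V := (Finset.mem_filter.mp hu'mem).1
    have huu' : u < u' := (Finset.mem_filter.mp hu'mem).2
    refine ⟨u', hu'V, ?_⟩
    have hset : V.filter (fun v => v < u') = insert u (V.filter (fun v => v < u)) := by
      ext v
      simp only [Finset.mem_filter, Finset.mem_insert]
      constructor
      · rintro ⟨hv, hvu'⟩
        rcases lt_trichotomy v u with h | h | h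
        · exact Or.inr ⟨hv, h⟩
        · exact Or.inl h
        · exfalso
          have : u' ≤ v := (V.filter (fun v => u < v)).min'_le v (Finset.mem_filter.mpr ⟨hv, h⟩)
          linarith
      · rintro (rfl | ⟨hv, hvu⟩)
        · exact ⟨hu, huu'⟩
        · exact ⟨hv, lt_trans hvu huu'⟩
    rw [hset, Finset.card_insert_of_notMem, hcard]
    intro hmem
    exact absurd (Finset.mem_filter.mp hmem).2 (lt_irrefl u)

lemma pick_point (lo u : ℝ) (h : lo < u) (F : Finset ℝ) : ∃ x, lo < x ∧ x < u ∧ x ∉ F := by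
  have h1 : (Set.Ioo lo u).Infinite := Set.Ioo_infinite h
  obtain ⟨x, hx⟩ := (h1.diff F.finite_toSet).nonempty
  exact ⟨x, hx.1.1, hx.1.2, by simpa using hx.2⟩

lemma step_lemma (hpos : ∀ h ∈ A, 0 < h.2.2) (r : Fin n → ℝ) (hGen : Gen A r)
    (i : Fin n) (m : ℕ) (hlt : m < cnt A r i) :
    ∃ r' : Fin n → ℝ, Gen A r' ∧ (∀ j, j ≠ i → r' j = r j) ∧ r' i < r i ∧
      cnt A r' i = m ∧ (∀ j, j ≠ i → cnt A r j ≤ cnt A r' j) ∧ (∃ j, j ≠ i ∧ r j < r' i) := by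
  classical
  set W := A.filter (fun h => h.1 = i) with hW
  set wall := fun h : Fin n × Fin n × ℝ => r h.2.1 + h.2.2 with hwall
  set V := W.image wall with hV
  have hcnt_eq : cnt A r i = (V.filter (fun v => v < r i)).card := by
    rw [cnt_plain A hpos r i, walls_card A r hGen i (r i)]
  have hmV : m < V.card := by
    have : (V.filter (fun v => v < r i)).card ≤ V.card := Finset.card_le_card (Finset.filter_subset _ _)
    omega
  obtain ⟨u, huV, hucard⟩ := exists_cut V m hmV
  have hur : u < r i := by
    by_contra hc
    push_neg at hc
    have hsub : V.filter (fun v => v < r i) ⊆ V.filter (fun v => v < u) := by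
      intro v hv
      have := Finset.mem_filter.mp hv
      exact Finset.mem_filter.mpr ⟨this.1, lt_of_lt_of_le this.2 hc⟩
    have := Finset.card_le_card hsub
    omega
  obtain ⟨h0, h0W, h0wall⟩ := Finset.mem_image.mp huV
  have h0A : h0 ∈ A := (Finset.mem_filter.mp h0W).1
  have h01 : h0.1 = i := (Finset.mem_filter.mp h0W).2
  have h0pos := hpos h0 h0A
  have hwall0 : r h0.2.1 + h0.2.2 = u := h0wall
  have hj0i : h0.2.1 ≠ i := by
    intro hji
    rw [hji] at hwall0
    linarith
  have hj0u : r h0.2.1 < u := by linarith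
  have hins : (insert (r h0.2.1) (V.filter (fun w => w < u))).Nonempty := Finset.insert_nonempty _ _
  set lo := (insert (r h0.2.1) (V.filter (fun w => w < u))).max' hins with hlo
  have hlou : lo < u := by
    rw [hlo, Finset.max'_lt_iff]
    intro b hb
    rcases Finset.mem_insert.mp hb with rfl | hbB
    · exact hj0u
    · exact (Finset.mem_filter.mp hbB).2
  have hloj0 : r h0.2.1 ≤ lo := Finset.le_max' _ _ (Finset.mem_insert_self _ _)
  set F := Finset.univ.biUnion (fun j : Fin n => (BAD A).image (fun b => r j + b)) with hF
  obtain ⟨x, hxlo, hxu, hxF⟩ := pick_point lo u hlou F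
  have hxnotbad : ∀ j : Fin n, x - r j ∉ BAD A := by
    intro j hb
    apply hxF
    exact Finset.mem_biUnion.mpr ⟨j, Finset.mem_univ _,
      Finset.mem_image.mpr ⟨x - r j, hb, by ring⟩⟩
  have hxri : x < r i := lt_trans hxu hur
  refine ⟨Function.update r i x, ?_, ?_, ?_, ?_, ?_, ?_⟩
  · -- Gen
    intro p q hpq
    by_cases hp : p = i
    · have hq : q ≠ i := fun h => hpq (hp.trans h.symm)
      have e1 : Function.update r i x p = x := by rw [hp]; exact Function.update_self ..
      rw [e1, Function.update_of_ne hq]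
      exact hxnotbad q
    · by_cases hq : q = i
      · have e1 : Function.update r i x q = x := by rw [hq]; exact Function.update_self ..
        rw [e1, Function.update_of_ne hp]
        intro hb
        have := BAD_neg A hb
        rw [neg_sub] at this
        exact hxnotbad p this
      · rw [Function.update_of_ne hp, Function.update_of_ne hq]
        exact hGen p q hpq
  · intro j hj; exact Function.update_of_ne hj _ _
  · rw [Function.update_self]; exact hxri
  · -- count
    rw [cnt_update A hpos r i x (le_of_lt hxri), walls_card A r hGen i x]
    have hfeq : (W.image wall).filter (fun v => v < x) = V.filter (fun w => w < u) := by
      apply Finset.filter_congr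
      intro v hv
      constructor
      · intro hvx; exact lt_trans hvx hxu
      · intro hvu
        have hvB : v ∈ V.filter (fun w => w < u) := Finset.mem_filter.mpr ⟨hv, hvu⟩
        have : v ≤ lo := Finset.le_max' _ _ (Finset.mem_insert_of_mem hvB)
        linarith
    rw [show (W.image wall) = V from rfl] at hfeq ⊢
    rw [hfeq]
    exact hucard
  · -- monotone others
    intro j hj
    unfold cnt
    apply Finset.card_le_card
    intro h hmem
    have hm := Finset.mem_filter.mp hmem
    refine Finset.mem_filter.mpr ⟨hm.1, hm.2.1, ?_⟩
    have h1j : h.1 = j := hm.2.1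
    have hold : r h.1 - r h.2.1 > h.2.2 := hm.2.2
    have hup1 : Function.update r i x h.1 = r h.1 := by
      rw [h1j]; exact Function.update_of_ne hj _ _
    by_cases h2 : h.2.1 = i
    · have hup2 : Function.update r i x h.2.1 = x := by rw [h2]; exact Function.update_self ..
      rw [hup1, hup2]
      rw [h2] at hold
      linarith
    · rw [hup1, Function.update_of_ne h2]
      exact hold
  · exact ⟨h0.2.1, hj0i, by rw [Function.update_self]; linarith⟩

lemma sumcard (i : Fin n) (I : Finset (Fin n)) :
    ∑ j ∈ Iᶜ, (A.filter (fun h => h.1 = i ∧ h.2.1 = j)).card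
      = (A.filter (fun h => h.1 = i ∧ h.2.1 ∉ I)).card := by
  rw [Finset.card_eq_sum_card_fiberwise
    (f := fun h : Fin n × Fin n × ℝ => h.2.1) (t := Iᶜ) ?_]
  · apply Finset.sum_congr rfl
    intro j hj
    rw [Finset.filter_filter]
    congr 1
    apply Finset.filter_congr
    intro h _
    have hjI : j ∉ I := Finset.mem_compl.mp hj
    constructor
    · rintro ⟨h1, h2⟩
      exact ⟨⟨h1, by rw [h2]; exact hjI⟩, h2⟩
    · rintro ⟨⟨h1, _⟩, h2⟩
      exact ⟨h1, h2⟩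
  · intro h hh
    exact Finset.mem_compl.mpr (Finset.mem_filter.mp hh).2.2

lemma rank_lemma
    (hpark : ∀ I : Finset (Fin n), I.Nonempty →
      ∃ i ∈ I, f i ≤ ∑ j ∈ Iᶜ, (A.filter (fun h => h.1 = i ∧ h.2.1 = j)).card) :
    ∀ I : Finset (Fin n), ∃ ρ : Fin n → ℕ, Set.InjOn ρ ↑I ∧
      ∀ v ∈ I, f v ≤ (A.filter (fun h => h.1 = v ∧
        (h.2.1 ∉ I ∨ (h.2.1 ∈ I ∧ ρ h.2.1 < ρ v)))).card := by
  intro I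
  induction I using Finset.strongInduction with
  | _ I ih =>
    by_cases hne : I.Nonempty
    · obtain ⟨i, hiI, hile⟩ := hpark I hne
      rw [sumcard] at hile
      obtain ⟨ρ', hinj', hcond'⟩ := ih (I.erase i) (Finset.erase_ssubset hiI)
      refine ⟨fun u => if u = i then 0 else ρ' u + 1, ?_, ?_⟩
      · intro u hu v hv heq
        simp only at heq
        by_cases hui : u = i <;> by_cases hvi : v = i
        · rw [hui, hvi]
        · rw [if_pos hui, if_neg hvi] at heq; omega
        · rw [if_neg hui, if_pos hvi] at heq; omega
        · rw [if_neg hui, if_neg hvi] at heq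
          exact hinj' (Finset.mem_coe.mpr (Finset.mem_erase.mpr ⟨hui, hu⟩))
            (Finset.mem_coe.mpr (Finset.mem_erase.mpr ⟨hvi, hv⟩)) (by omega)
      · intro v hv
        by_cases hvi : v = i
        · subst hvi
          refine le_trans hile (Finset.card_le_card ?_)
          intro h hh
          have hm := Finset.mem_filter.mp hh
          exact Finset.mem_filter.mpr ⟨hm.1, hm.2.1, Or.inl hm.2.2⟩
        · have hvI' : v ∈ I.erase i := Finset.mem_erase.mpr ⟨hvi, hv⟩
          refine le_trans (hcond' v hvI') (Finset.card_le_card ?_)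
          intro h hh
          have hm := Finset.mem_filter.mp hh
          refine Finset.mem_filter.mpr ⟨hm.1, hm.2.1, ?_⟩
          rcases hm.2.2 with hnot | ⟨hmem, hlt⟩
          · by_cases hji : h.2.1 = i
            · refine Or.inr ⟨by rw [hji]; exact hiI, ?_⟩
              simp only [if_pos hji, if_neg hvi]
              omega
            · exact Or.inl (fun hjI => hnot (Finset.mem_erase.mpr ⟨hji, hjI⟩))
          · have hji : h.2.1 ≠ i := (Finset.mem_erase.mp hmem).1
            refine Or.inr ⟨(Finset.mem_erase.mp hmem).2, ?_⟩
            simp only [if_neg hji, if_neg hvi]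
            omega
    · refine ⟨fun _ => 0, ?_, ?_⟩
      · intro u hu
        exfalso; exact hne ⟨u, Finset.mem_coe.mp hu⟩
      · intro v hv
        exfalso; exact hne ⟨v, hv⟩


lemma init_lemma (hpos : ∀ h ∈ A, 0 < h.2.2)
    (hpark : ∀ I : Finset (Fin n), I.Nonempty →
      ∃ i ∈ I, f i ≤ ∑ j ∈ Iᶜ, (A.filter (fun h => h.1 = i ∧ h.2.1 = j)).card) :
    ∃ r0 : Fin n → ℝ, Gen A r0 ∧ ∀ i, f i ≤ cnt A r0 i := by
  classical
  obtain ⟨ρ, hinj, hcond⟩ := rank_lemma A f hpark Finset.univ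
  have hBne : ((BAD A ∪ Vals A).image (fun b => |b|)).Nonempty := by
    refine Finset.Nonempty.image ?_ _
    exact ⟨0, Finset.mem_union_left _ (Finset.mem_insert_self _ _)⟩
  set M : ℝ := 1 + ((BAD A ∪ Vals A).image (fun b => |b|)).max' hBne with hM
  have habs : ∀ b ∈ BAD A ∪ Vals A, |b| < M := by
    intro b hb
    have := Finset.le_max' _ _ (Finset.mem_image_of_mem (fun b => |b|) hb)
    rw [hM]; linarith
  have hM0 : 0 < M := by
    have h0 : (0:ℝ) ∈ BAD A ∪ Vals A := Finset.mem_union_left _ (Finset.mem_insert_self _ _)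
    have := habs 0 h0
    rw [abs_zero] at this
    linarith
  have hMb : ∀ b ∈ BAD A, |b| < M := fun b hb => habs b (Finset.mem_union_left _ hb)
  have hMa : ∀ a ∈ Vals A, a < M := fun a ha =>
    lt_of_le_of_lt (le_abs_self a) (habs a (Finset.mem_union_right _ ha))
  refine ⟨fun v => (ρ v : ℝ) * M, ?_, ?_⟩
  · intro p q hpq hbad
    have hne2 : ρ p ≠ ρ q := fun h =>
      hpq (hinj (Finset.mem_coe.mpr (Finset.mem_univ p)) (Finset.mem_coe.mpr (Finset.mem_univ q)) h)
    have h1 : (1:ℝ) ≤ |(ρ p:ℝ) - (ρ q:ℝ)| := by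
      have hz : (1:ℤ) ≤ |(ρ p:ℤ) - (ρ q:ℤ)| := by
        apply Int.one_le_abs
        have : (ρ p:ℤ) ≠ (ρ q:ℤ) := by exact_mod_cast hne2
        exact sub_ne_zero.mpr this
      have : ((1:ℤ):ℝ) ≤ ((|(ρ p:ℤ) - (ρ q:ℤ)|:ℤ):ℝ) := by exact_mod_cast hz
      push_cast at this
      convert this using 2 <;> push_cast <;> ring
    have habs2 : |(ρ p:ℝ) * M - (ρ q:ℝ) * M| = |(ρ p:ℝ) - (ρ q:ℝ)| * M := by
      rw [← sub_mul, abs_mul, abs_of_pos hM0]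
    have hge : M ≤ |(ρ p:ℝ) * M - (ρ q:ℝ) * M| := by
      rw [habs2]
      nlinarith
    have := hMb _ hbad
    simp only at this
    linarith
  · intro v
    refine le_trans (hcond v (Finset.mem_univ v)) ?_
    unfold cnt
    apply Finset.card_le_card
    intro h hh
    have hm := Finset.mem_filter.mp hh
    refine Finset.mem_filter.mpr ⟨hm.1, hm.2.1, ?_⟩
    have hdisj := hm.2.2
    have hlt : ρ h.2.1 < ρ v := by
      rcases hdisj with hno | ⟨_, hlt⟩
      · exact absurd (Finset.mem_univ h.2.1) hno
      · exact hlt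
    have hcast : (ρ h.2.1:ℝ) + 1 ≤ (ρ v:ℝ) := by exact_mod_cast hlt
    have hval := hMa _ (vals_mem A hm.1)
    have h1v : h.1 = v := hm.2.1
    rw [h1v]
    simp only
    nlinarith

end Aux

lemma nat_ivt (g : ℕ → ℕ) (a b : ℕ) (hab : a ≤ b) (hg : g a < g b) :
    ∃ k, a ≤ k ∧ k < b ∧ g k < g (k + 1) := by
  by_contra hc
  push_neg at hc
  have H : ∀ d, a + d ≤ b → g (a + d) ≤ g a := by
    intro d
    induction d with
    | zero => intro _; exact le_rfl
    | succ d ih =>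
      intro hdb
      have h1 : g (a + d + 1) ≤ g (a + d) := hc (a + d) (by omega) (by omega)
      have h2 := ih (by omega)
      calc g (a + d + 1) ≤ g (a + d) := h1
        _ ≤ g a := h2
  have := H (b - a) (by omega)
  rw [show a + (b - a) = b by omega] at this
  omega

lemma pigeon {n : ℕ} (d : ℕ → Fin n) (P : ℕ → Prop) (hP : ∀ K, ∃ k, K ≤ k ∧ P k) :
    ∃ j, ∀ K, ∃ k, K ≤ k ∧ P k ∧ d k = j := by
  by_contra hc
  push_neg at hc
  choose KK hKK using hc
  obtain ⟨k, hk, hPk⟩ := hP (Finset.univ.sup KK)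
  exact (hKK (d k) k (le_trans (Finset.le_sup (Finset.mem_univ _)) hk) hPk) rfl

/-- Surjectivity of the Pak–Stanley labeling: every `G_𝒜`-parking
function arises as the label `λ_r` of some point `r` of the complement of `𝒜`. -/
theorem stmt5 (n : ℕ) (A : Finset (Fin n × Fin n × ℝ))
    (hpos : ∀ h ∈ A, 0 < h.2.2)
    (f : Fin n → ℕ)
    (hpark : ∀ I : Finset (Fin n), I.Nonempty →
      ∃ i ∈ I, f i ≤ ∑ j ∈ Iᶜ, (A.filter (fun h => h.1 = i ∧ h.2.1 = j)).card) :
    ∃ r : Fin n → ℝ, (∑ i, r i = 0) ∧ (∀ h ∈ A, r h.1 - r h.2.1 ≠ h.2.2) ∧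
      ∀ i, f i = (A.filter (fun h => h.1 = i ∧ r h.1 - r h.2.1 > h.2.2)).card := by
  classical
  rcases Nat.eq_zero_or_pos n with hn0 | hn
  · subst hn0
    exact ⟨fun _ => 0, by simp, fun h _ => (h.1).elim0, fun i => i.elim0⟩
  · obtain ⟨r0, hr0gen, hr0feas⟩ := init_lemma A f hpos hpark
    have huniv_ne : (Finset.univ : Finset (Fin n)).Nonempty := ⟨⟨0, hn⟩, Finset.mem_univ _⟩
    set L0 : ℝ := Finset.univ.inf' huniv_ne r0 with hL0
    have KEY : ∃ r, Gen A r ∧ ∀ i, cnt A r i = f i := by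
      by_contra hK
      push_neg at hK
      have hstep : ∀ p : {r : Fin n → ℝ //
            Gen A r ∧ (∀ i, f i ≤ cnt A r i) ∧ (∀ k, L0 ≤ r k)},
          ∃ q : {r : Fin n → ℝ //
            Gen A r ∧ (∀ i, f i ≤ cnt A r i) ∧ (∀ k, L0 ≤ r k)}, ∃ i : Fin n,
          (∀ j, j ≠ i → q.1 j = p.1 j) ∧ q.1 i < p.1 i ∧ f i < cnt A p.1 i ∧
          cnt A q.1 i = f i ∧ (∀ j, j ≠ i → cnt A p.1 j ≤ cnt A q.1 j) := by
        rintro ⟨r, hGenr, hFeas, hLBr⟩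
        obtain ⟨i, hi⟩ := hK r hGenr
        have hlt : f i < cnt A r i := lt_of_le_of_ne (hFeas i) (Ne.symm hi)
        obtain ⟨r', hgen', hkeep, hdec, hcnt', hmono, j0, hj0, hj0lt⟩ :=
          step_lemma A hpos r hGenr i (f i) hlt
        refine ⟨⟨r', hgen', ?_, ?_⟩, i, hkeep, hdec, hlt, hcnt', hmono⟩
        · intro j
          by_cases hj : j = i
          · rw [hj, hcnt']
          · exact le_trans (hFeas j) (hmono j hj)
        · intro k
          by_cases hk : k = i
          · rw [hk]
            exact le_of_lt (lt_of_le_of_lt (hLBr j0) hj0lt)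
          · rw [hkeep k hk]; exact hLBr k
      choose g dd hg using hstep
      set init : {r : Fin n → ℝ //
          Gen A r ∧ (∀ i, f i ≤ cnt A r i) ∧ (∀ k, L0 ≤ r k)} :=
        ⟨r0, hr0gen, hr0feas, fun k => Finset.inf'_le _ (Finset.mem_univ _)⟩ with hinit
      set σ : ℕ → {r : Fin n → ℝ //
          Gen A r ∧ (∀ i, f i ≤ cnt A r i) ∧ (∀ k, L0 ≤ r k)} :=
        fun k => g^[k] init with hσdef
      have hσ : ∀ k, σ (k+1) = g (σ k) := fun k => Function.iterate_succ_apply' g k init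
      set R : ℕ → Fin n → ℝ := fun k => (σ k).1 with hRdef
      set D : ℕ → Fin n := fun k => dd (σ k) with hDdef
      have hP : ∀ k, (∀ j, j ≠ D k → R (k+1) j = R k j) ∧ R (k+1) (D k) < R k (D k) ∧
          f (D k) < cnt A (R k) (D k) ∧ cnt A (R (k+1)) (D k) = f (D k) ∧
          (∀ j, j ≠ D k → cnt A (R k) j ≤ cnt A (R (k+1)) j) := by
        intro k
        have h := hg (σ k)
        rw [← hσ k] at h
        exact h
      have hmono1 : ∀ j k, R (k+1) j ≤ R k j := by
        intro j k
        by_cases hj : j = D k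
        · rw [hj]; exact le_of_lt (hP k).2.1
        · rw [(hP k).1 j hj]
      have hanti : ∀ j, ∀ p q : ℕ, p ≤ q → R q j ≤ R p j := by
        intro j p q hpq
        have : Antitone (fun k => R k j) := antitone_nat_of_succ_le (fun k => hmono1 j k)
        exact this hpq
      have hLB : ∀ k j, L0 ≤ R k j := fun k j => (σ k).2.2.2 j
      have hAne : A.Nonempty := by
        have h4 := (hP 0).2.2.1
        have h5 : 0 < cnt A (R 0) (D 0) := by omega
        unfold cnt at h5
        obtain ⟨h, hh⟩ := Finset.card_pos.mp h5
        exact ⟨h, (Finset.mem_filter.mp hh).1⟩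
      have hVne : (Vals A).Nonempty := hAne.image _
      set δ := (Vals A).min' hVne with hδdef
      have hδpos : 0 < δ := by
        obtain ⟨h, hhA, hhv⟩ := Finset.mem_image.mp ((Vals A).min'_mem hVne)
        rw [hδdef, ← hhv]
        exact hpos h hhA
      have hδle : ∀ h ∈ A, δ ≤ h.2.2 := fun h hh => Finset.min'_le _ _ (vals_mem A hh)
      have hbdd : ∀ j, BddBelow (Set.range (fun k => R k j)) := fun j =>
        ⟨L0, by rintro y ⟨k, rfl⟩; exact hLB k j⟩
      set star : Fin n → ℝ := fun j => ⨅ k, R k j with hstardef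
      have hstar_le : ∀ j k, star j ≤ R k j := fun j k => ciInf_le (hbdd j) k
      set Sinf : Fin n → Prop := fun v => ∀ K, ∃ k, K ≤ k ∧ D k = v with hSinfdef
      have hSne : ∃ v, Sinf v := by
        obtain ⟨j, hj⟩ := pigeon D (fun _ => True) (fun K => ⟨K, le_rfl, trivial⟩)
        exact ⟨j, fun K => (hj K).imp (fun k hk => ⟨hk.1, hk.2.2⟩)⟩
      have hdescent : ∀ v, Sinf v → ∃ j, Sinf j ∧ star j + δ ≤ star v := by
        intro v hv
        have hinc : ∀ K, ∃ k, K ≤ k ∧ cnt A (R k) v < cnt A (R (k+1)) v := by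
          intro K
          obtain ⟨k1, hk1K, hk1⟩ := hv K
          obtain ⟨k2, hk2ge, hk2v⟩ := hv (k1+1)
          have hstart : cnt A (R (k1+1)) v = f v := by
            rw [← hk1]; exact (hP k1).2.2.2.1
          have hend : f v < cnt A (R k2) v := by
            rw [← hk2v]; exact (hP k2).2.2.1
          obtain ⟨k', hk'a, _, hk'inc⟩ := nat_ivt (fun k => cnt A (R k) v) (k1+1) k2
            hk2ge (by show cnt A (R (k1 + 1)) v < cnt A (R k2) v; rw [hstart]; exact hend)
          exact ⟨k', by omega, hk'inc⟩
        obtain ⟨j, hj⟩ := pigeon D _ hinc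
        have hSj : Sinf j := fun K => (hj K).imp (fun k hk => ⟨hk.1, hk.2.2⟩)
        refine ⟨j, hSj, ?_⟩
        have hkey : ∀ K, star j + δ ≤ R K v := by
          intro K
          obtain ⟨k, hkK, hkinc, hkd⟩ := hj K
          have hvD : v ≠ D k := by
            intro hvd
            have h1 := (hP k).2.2.2.1
            have h2 := (hP k).2.2.1
            rw [← hvd] at h1 h2
            omega
          have hnotsub : ¬ (A.filter (fun h => h.1 = v ∧
                R (k+1) h.1 - R (k+1) h.2.1 > h.2.2))
              ⊆ (A.filter (fun h => h.1 = v ∧ R k h.1 - R k h.2.1 > h.2.2)) := by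
            intro hsub
            have hcard := Finset.card_le_card hsub
            unfold cnt at hkinc
            omega
          obtain ⟨h, hhmem, hhnot⟩ := Finset.not_subset.mp hnotsub
          have hm1 := Finset.mem_filter.mp hhmem
          have hhA := hm1.1
          have hh1 : h.1 = v := hm1.2.1
          have hnew : R (k+1) h.1 - R (k+1) h.2.1 > h.2.2 := hm1.2.2
          have hold : R k h.1 - R k h.2.1 ≤ h.2.2 := by
            by_contra hcontra
            push_neg at hcontra
            exact hhnot (Finset.mem_filter.mpr ⟨hhA, hh1, hcontra⟩)
          have hv_eq : R (k+1) h.1 = R k h.1 := by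
            rw [hh1]
            exact (hP k).1 v hvD
          have hwmoved : R (k+1) h.2.1 < R k h.2.1 := by
            by_contra hc
            push_neg at hc
            rw [hv_eq] at hnew
            linarith
          have hw : h.2.1 = D k := by
            by_contra hc
            rw [(hP k).1 h.2.1 hc] at hwmoved
            exact lt_irrefl _ hwmoved
          have hs1 : star j ≤ R (k+1) h.2.1 := by
            rw [hw, hkd]
            exact hstar_le j (k+1)
          have hδh := hδle h hhA
          have hs3 : R (k+1) h.1 ≤ R K h.1 := hanti h.1 K (k+1) (by omega)
          calc star j + δ ≤ R (k+1) h.2.1 + δ := by linarith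
            _ ≤ R (k+1) h.1 := by linarith
            _ ≤ R K h.1 := hs3
            _ = R K v := by rw [hh1]
        exact le_ciInf (fun k => hkey k)
      obtain ⟨v0, hv0⟩ := hSne
      have hSFne : (Finset.univ.filter Sinf).Nonempty :=
        ⟨v0, Finset.mem_filter.mpr ⟨Finset.mem_univ _, hv0⟩⟩
      obtain ⟨vm, hvmSF, hvmmin⟩ := Finset.exists_min_image (Finset.univ.filter Sinf) star hSFne
      obtain ⟨j, hjS, hjle⟩ := hdescent vm (Finset.mem_filter.mp hvmSF).2
      have hmin := hvmmin j (Finset.mem_filter.mpr ⟨Finset.mem_univ _, hjS⟩)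
      linarith
    obtain ⟨r, hrgen, hrcnt⟩ := KEY
    set c : ℝ := (∑ i, r i) / n with hc
    refine ⟨fun i => r i - c, ?_, ?_, ?_⟩
    · rw [Finset.sum_sub_distrib, Finset.sum_const, Finset.card_univ, Fintype.card_fin,
        nsmul_eq_mul, hc]
      have hnne : (n:ℝ) ≠ 0 := Nat.cast_ne_zero.mpr (by omega)
      field_simp
      ring
    · intro h hh
      simp only
      intro heq
      have heq2 : r h.1 - r h.2.1 = h.2.2 := by linarith
      by_cases he : h.1 = h.2.1
      · rw [he, sub_self] at heq2
        have := hpos h hh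
        rw [← heq2] at this
        exact lt_irrefl 0 this
      · have hb := vals_mem_BAD A (vals_mem A hh)
        rw [← heq2] at hb
        exact hrgen h.1 h.2.1 he hb
    · intro i
      rw [← hrcnt i]
      unfold cnt
      congr 1
      apply Finset.filter_congr
      intro h _
      simp only
      constructor
      · rintro ⟨h1, h2⟩
        exact ⟨h1, by linarith⟩
      · rintro ⟨h1, h2⟩
        exact ⟨h1, by linarith⟩
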